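/- Let $c > 0$ be continuous on $(T,+\infty)$ with $c(t)e^{-t}$ decreasing and $\int_T^{+\infty} c(t)e^{-t}dt < \infty$, and let $\tilde{c} > 0$ be continuous on $(T,+\infty)$ such that $\tilde{c}/c$ is decreasing (equivalently $(\log\tilde{c})' \le (\log c)'$ when differentiable). Let $\mu, f \ge 0, \psi < -T$ be as before with $\int_{\{\psi<-t\}} f\,d\mu = k\int_t^{+\infty} c(t_1)e^{-t_1}dt_1$ for some constant $k > 0$ and all $t \ge T$. Then for all $t \ge T$: $\int_{\{\psi<-t\}} \frac{\tilde{c}(-\psi)}{c(-\psi)} f\,d\mu = k\int_t^{+\infty} \tilde{c}(t_1)e^{-t_1}\,dt_1$, provided $\tilde{c}/c$ extends continuously to $[T,+\infty)$ and $\lim_{t\to+\infty} \frac{\tilde c(t)}{c(t)}\int_t^{+\infty} c(t_1)e^{-t_1}dt_1 = 0$. -/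

import Mathlib

open MeasureTheory Real Set Filter
open scoped ENNReal NNReal

theorem stmt_19 (T : ℝ) {X : Type*} [MeasurableSpace X] (μ : Measure X)
    (f : X → ℝ) (hf_meas : Measurable f) (hf_nonneg : ∀ x, 0 ≤ f x)
    (ψ : X → ℝ) (hψ_meas : Measurable ψ) (hψ : ∀ x, ψ x < -T)
    (c : ℝ → ℝ)
    (hc_cont : ContinuousOn c (Ioi T))
    (hc_pos : ∀ t ∈ Ioi T, 0 < c t)
    (hc_dec : ∀ s ∈ Ioi T, ∀ t ∈ Ioi T, s ≤ t → c t * exp (-t) ≤ c s * exp (-s))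
    (hc_int : IntegrableOn (fun t => c t * exp (-t)) (Ioi T))
    (ctil : ℝ → ℝ)
    (hctil_cont : ContinuousOn ctil (Ioi T))
    (hctil_pos : ∀ t ∈ Ioi T, 0 < ctil t)
    (hquot_dec : AntitoneOn (fun t => ctil t / c t) (Ioi T))
    (hquot_cont : ContinuousOn (fun t => ctil t / c t) (Ici T))
    (hlim : Tendsto (fun t => ctil t / c t * ∫ t1 in Ioi t, c t1 * exp (-t1)) atTop (nhds 0))
    (hf_int : IntegrableOn f {y | ψ y < -T} μ)
    (k : ℝ) (hk : 0 < k)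
    (hmass : ∀ t ≥ T, ∫ x in {y | ψ y < -t}, f x ∂μ = k * ∫ t1 in Ioi t, c t1 * exp (-t1)) :
    ∀ t ≥ T, ∫ x in {y | ψ y < -t}, (ctil (-ψ x) / c (-ψ x)) * f x ∂μ =
      k * ∫ t1 in Ioi t, ctil t1 * exp (-t1) := by
  intro t ht
  set a : ℝ → ℝ := fun s => ctil s / c s with ha
  have hSm : ∀ s : ℝ, MeasurableSet {y | ψ y < -s} := fun s =>
    measurableSet_lt hψ_meas measurable_const
  set S : Set X := {y | ψ y < -t} with hS
  have hdens_meas : Measurable (fun x => ((f x).toNNReal : ℝ≥0∞)) :=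
    hf_meas.real_toNNReal.coe_nnreal_ennreal
  set ν : Measure X := (μ.restrict S).withDensity (fun x => ((f x).toNNReal : ℝ≥0∞)) with hν
  set ν₁ : Measure ℝ := ν.map (fun x => -ψ x) with hν₁
  set d2 : ℝ → ℝ := fun s => k * (c s * exp (-s)) with hd2
  have hd2_aemeas : AEMeasurable d2 (volume.restrict (Ioi t)) := by
    have hsub : Ioi t ⊆ Ioi T := Ioi_subset_Ioi ht
    have hc' : AEMeasurable c (volume.restrict (Ioi t)) :=
      (hc_cont.mono hsub).aemeasurable measurableSet_Ioi
    exact (aemeasurable_const.mul (hc'.mul (Real.measurable_exp.comp measurable_neg).aemeasurable))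
  set ν₂ : Measure ℝ := (volume.restrict (Ioi t)).withDensity (fun s => ENNReal.ofReal (d2 s))
    with hν₂
  -- subsets of the fixed integrability set
  have hsubT : ∀ s ≥ T, {y | ψ y < -s} ⊆ {y | ψ y < -T} := by
    intro s hs x hx
    simp only [mem_setOf_eq] at hx ⊢
    exact lt_of_lt_of_le hx (by linarith)
  have hfint' : ∀ s ≥ T, IntegrableOn f {y | ψ y < -s} μ := fun s hs =>
    hf_int.mono_set (hsubT s hs)
  have hd2int : ∀ s ≥ T, IntegrableOn d2 (Ioi s) := fun s hs =>
    ((hc_int.mono_set (Ioi_subset_Ioi hs)).const_mul k)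
  -- value of ν₁ on Ioi s, s ≥ t
  have hν₁Ioi : ∀ s ≥ t, ν₁ (Ioi s) = ENNReal.ofReal (∫ x in {y | ψ y < -s}, f x ∂μ) := by
    intro s hs
    have hsT : s ≥ T := le_trans ht hs
    rw [hν₁, Measure.map_apply (f := fun x => -ψ x) hψ_meas.neg measurableSet_Ioi]
    have hpre : (fun x => -ψ x) ⁻¹' Ioi s = {y | ψ y < -s} := by
      ext x; simp [lt_neg]
    rw [hpre, hν, withDensity_apply _ (hSm s), Measure.restrict_restrict (hSm s)]
    have hinter : {y | ψ y < -s} ∩ S = {y | ψ y < -s} := by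
      apply inter_eq_left.mpr
      intro x hx
      simp only [mem_setOf_eq] at hx ⊢
      exact lt_of_lt_of_le hx (by linarith)
    rw [hinter]
    have : ∫⁻ x in {y | ψ y < -s}, ((f x).toNNReal : ℝ≥0∞) ∂μ
        = ∫⁻ x in {y | ψ y < -s}, ENNReal.ofReal (f x) ∂μ := rfl
    rw [this, ← ofReal_integral_eq_lintegral_ofReal (hfint' s hsT)
      (ae_of_all _ hf_nonneg)]
  have hν₂Ioi : ∀ s ≥ t, ν₂ (Ioi s) = ENNReal.ofReal (∫ t1 in Ioi s, d2 t1) := by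
    intro s hs
    have hsT : s ≥ T := le_trans ht hs
    rw [hν₂, withDensity_apply _ measurableSet_Ioi,
      Measure.restrict_restrict measurableSet_Ioi]
    rw [inter_eq_left.mpr (Ioi_subset_Ioi hs)]
    rw [← ofReal_integral_eq_lintegral_ofReal (hd2int s hsT)]
    exact (ae_restrict_iff' measurableSet_Ioi).2 (ae_of_all _ (fun x hx =>
      mul_nonneg hk.le (mul_nonneg (hc_pos x (lt_of_le_of_lt hsT hx)).le (exp_pos _).le)))
  have hIoi_eq : ∀ s ≥ t, ν₁ (Ioi s) = ν₂ (Ioi s) := by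
    intro s hs
    rw [hν₁Ioi s hs, hν₂Ioi s hs, hmass s (le_trans ht hs)]
    congr 1
    rw [hd2]
    simp_rw [integral_const_mul]
  -- total masses
  have hν₁univ : ν₁ univ = ν₁ (Ioi t) := by
    rw [hν₁Ioi t le_rfl, hν₁, Measure.map_apply (f := fun x => -ψ x) hψ_meas.neg MeasurableSet.univ,
      preimage_univ, hν, withDensity_apply _ MeasurableSet.univ, Measure.restrict_univ]
    have : ∫⁻ x in S, ((f x).toNNReal : ℝ≥0∞) ∂μ
        = ∫⁻ x in S, ENNReal.ofReal (f x) ∂μ := rfl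
    rw [this, ← ofReal_integral_eq_lintegral_ofReal (hfint' t ht) (ae_of_all _ hf_nonneg)]
  have hν₂univ : ν₂ univ = ν₂ (Ioi t) := by
    rw [hν₂Ioi t le_rfl, hν₂, withDensity_apply _ MeasurableSet.univ, Measure.restrict_univ,
      ← ofReal_integral_eq_lintegral_ofReal (hd2int t ht)]
    exact (ae_restrict_iff' measurableSet_Ioi).2 (ae_of_all _ (fun x hx =>
      mul_nonneg hk.le (mul_nonneg (hc_pos x (lt_of_le_of_lt ht hx)).le (exp_pos _).le)))
  have hfin₁ : IsFiniteMeasure ν₁ := by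
    constructor
    rw [hν₁univ, hν₁Ioi t le_rfl]
    exact ENNReal.ofReal_lt_top
  have hfin₂ : IsFiniteMeasure ν₂ := by
    constructor
    rw [hν₂univ, hν₂Ioi t le_rfl]
    exact ENNReal.ofReal_lt_top
  have huniv : ν₁ univ = ν₂ univ := by
    rw [hν₁univ, hν₂univ, hIoi_eq t le_rfl]
  -- all Ioi agree
  have hIoi_all : ∀ s, ν₁ (Ioi s) = ν₂ (Ioi s) := by
    intro s
    rcases le_total t s with hs | hs
    · exact hIoi_eq s hs
    · -- for s ≤ t both equal the value at t
      have h₁ : ν₁ (Ioi s) = ν₁ (Ioi t) := by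
        apply le_antisymm
        · exact hν₁univ ▸ measure_mono (subset_univ _)
        · exact measure_mono (Ioi_subset_Ioi hs)
      have h₂ : ν₂ (Ioi s) = ν₂ (Ioi t) := by
        apply le_antisymm
        · exact hν₂univ ▸ measure_mono (subset_univ _)
        · exact measure_mono (Ioi_subset_Ioi hs)
      rw [h₁, h₂, hIoi_eq t le_rfl]
  have hνeq : ν₁ = ν₂ := by
    have := hfin₁
    refine Measure.ext_of_Iic ν₁ ν₂ (fun s => ?_)
    have h1 : Iic s = (Ioi s)ᶜ := compl_Ioi.symm
    rw [h1, measure_compl measurableSet_Ioi (measure_ne_top _ _),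
      measure_compl measurableSet_Ioi (measure_ne_top _ _), huniv, hIoi_all s]
  -- now convert the integrals
  have hφmeas : AEMeasurable (fun x => -ψ x) ν := hψ_meas.neg.aemeasurable
  have ha_aesm : AEStronglyMeasurable a ν₁ := by
    rw [hνeq]
    have h0 : AEStronglyMeasurable a (volume.restrict (Ioi t)) :=
      ContinuousOn.aestronglyMeasurable
        (hquot_cont.mono (fun x hx => le_trans ht (le_of_lt hx))) measurableSet_Ioi
    exact h0.mono_ac (withDensity_absolutelyContinuous _ _)
  have hLHS : ∫ x in S, (ctil (-ψ x) / c (-ψ x)) * f x ∂μ = ∫ s, a s ∂ν₁ := by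
    rw [hν₁, integral_map hφmeas ha_aesm, hν,
      integral_withDensity_eq_integral_smul hf_meas.real_toNNReal (fun x => a (-ψ x))]
    apply integral_congr_ae
    apply ae_of_all
    intro x
    simp only [ha, NNReal.smul_def, smul_eq_mul, Real.coe_toNNReal _ (hf_nonneg x)]
    ring
  have hRHS : ∫ s, a s ∂ν₂ = k * ∫ t1 in Ioi t, ctil t1 * exp (-t1) := by
    have hd2nn : AEMeasurable (fun s => (d2 s).toNNReal) (volume.restrict (Ioi t)) :=
      hd2_aemeas.real_toNNReal
    have hcoe : (fun s => ENNReal.ofReal (d2 s)) = fun s => (((d2 s).toNNReal : ℝ≥0) : ℝ≥0∞) :=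
      rfl
    rw [hν₂, hcoe, integral_withDensity_eq_integral_smul₀ hd2nn a]
    rw [← integral_const_mul]
    apply setIntegral_congr_fun measurableSet_Ioi
    intro s hs
    have hsT : T < s := lt_of_le_of_lt ht hs
    have hcpos := hc_pos s hsT
    simp only [NNReal.smul_def, smul_eq_mul,
      Real.coe_toNNReal _ (mul_nonneg hk.le (mul_nonneg hcpos.le (exp_pos _).le))]
    have hc0 : c s ≠ 0 := ne_of_gt hcpos
    rw [show ((d2 s).toNNReal : ℝ) = d2 s from Real.coe_toNNReal _ (mul_nonneg hk.le (mul_nonneg hcpos.le (exp_pos _).le)), hd2, ha]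
    field_simp [hd2, ha]
  rw [hLHS, hνeq, hRHS]
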